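/- arXiv:2312.15834 — 3 statements merged into one kernel-verified Lean document; each statement's English description precedes it below -/
import Mathlib

section
/- Let Q ⊆ I be a finite index set, P ⊆ Q, and aᵢ ∈ ℝⁿ for i ∈ Q. Define B_{Q,P} = {u ∈ ℝⁿ : ⟨aᵢ, u⟩ ≤ 0 for all i ∈ Q, and ⟨aᵢ, u⟩ = 0 for all i ∈ P} and A_{Q,P} = cone{aᵢ : i ∈ Q \ P} + span{aᵢ : i ∈ P}. Then the polar cone of B_{Q,P} equals A_{Q,P}: (B_{Q,P})° = A_{Q,P}. -/
open Set Filter Topology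
open scoped Classical

noncomputable section

section Aux

variable {E : Type*} [NormedAddCommGroup E] [InnerProductSpace ℝ E] [FiniteDimensional ℝ E]

set_option linter.unusedSectionVars false

lemma cone_closed_of_li {ι : Type*} [Fintype ι] (g : ι → E)
    (hg : LinearIndependent ℝ g) :
    IsClosed {x : E | ∃ c : ι → ℝ, (∀ i, 0 ≤ c i) ∧ x = ∑ i, c i • g i} := by
  set f : (ι → ℝ) →ₗ[ℝ] E := Fintype.linearCombination ℝ g with hf
  have hker : LinearMap.ker f = ⊥ := by
    rw [LinearMap.ker_eq_bot']
    intro c hc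
    have := Fintype.linearIndependent_iff.mp hg c (by simpa [hf, Fintype.linearCombination_apply] using hc)
    funext i; exact this i
  have hemb : IsClosedEmbedding f := LinearMap.isClosedEmbedding_of_injective hker
  have hset : {x : E | ∃ c : ι → ℝ, (∀ i, 0 ≤ c i) ∧ x = ∑ i, c i • g i}
      = f '' {c : ι → ℝ | ∀ i, 0 ≤ c i} := by
    ext x
    simp only [Set.mem_setOf_eq, Set.mem_image, hf, Fintype.linearCombination_apply]
    constructor
    · rintro ⟨c, hc, rfl⟩; exact ⟨c, hc, rfl⟩
    · rintro ⟨c, hc, rfl⟩; exact ⟨c, hc, rfl⟩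
  rw [hset]
  apply hemb.isClosedMap
  have : {c : ι → ℝ | ∀ i, 0 ≤ c i} = ⋂ i, (fun c : ι → ℝ => c i) ⁻¹' Set.Ici 0 := by
    ext c; simp [Set.mem_iInter]
  rw [this]
  exact isClosed_iInter fun i => (isClosed_Ici).preimage (continuous_apply i)


lemma cone_reduce {ι : Type*} [DecidableEq ι] (g : ι → E) (s : Finset ι)
    (c d : ι → ℝ) (hc : ∀ i, 0 ≤ c i) (hd0 : ∑ i ∈ s, d i • g i = 0)
    (hdpos : ∃ i ∈ s, 0 < d i) :
    ∃ i₀ ∈ s, ∃ c' : ι → ℝ, (∀ i, 0 ≤ c' i) ∧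
      ∑ i ∈ s.erase i₀, c' i • g i = ∑ i ∈ s, c i • g i := by
  classical
  set T := s.filter (fun i => 0 < d i) with hT
  have hTne : T.Nonempty := by
    obtain ⟨i, hi, hdi⟩ := hdpos
    exact ⟨i, Finset.mem_filter.mpr ⟨hi, hdi⟩⟩
  obtain ⟨i₀, hi₀T, hmin⟩ := T.exists_min_image (fun i => c i / d i) hTne
  obtain ⟨hi₀s, hdi₀⟩ := Finset.mem_filter.mp hi₀T
  set r := c i₀ / d i₀ with hr
  have hr0 : 0 ≤ r := div_nonneg (hc i₀) hdi₀.le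
  refine ⟨i₀, hi₀s, fun i => if i ∈ s then c i - r * d i else 0, ?_, ?_⟩
  · intro i
    by_cases hi : i ∈ s
    · simp only [hi, if_true]
      by_cases hdi : 0 < d i
      · have := hmin i (Finset.mem_filter.mpr ⟨hi, hdi⟩)
        have : r * d i ≤ c i := by
          rw [← le_div_iff₀ hdi]; exact this
        linarith
      · push_neg at hdi
        have : r * d i ≤ 0 := mul_nonpos_of_nonneg_of_nonpos hr0 hdi
        have := hc i; linarith
    · simp [hi]
  · have hz : (if i₀ ∈ s then c i₀ - r * d i₀ else 0) = 0 := by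
      simp only [hi₀s, if_true, hr]
      field_simp
      ring
    have hsum : ∑ i ∈ s, (if i ∈ s then c i - r * d i else 0) • g i
        = ∑ i ∈ s, c i • g i := by
      rw [Finset.sum_congr rfl (fun i hi => by rw [if_pos hi])]
      have : ∑ i ∈ s, (c i - r * d i) • g i
          = ∑ i ∈ s, c i • g i - r • ∑ i ∈ s, d i • g i := by
        rw [Finset.smul_sum, ← Finset.sum_sub_distrib]
        congr 1; ext i
        rw [sub_smul, smul_smul]
      rw [this, hd0, smul_zero, sub_zero]
    calc ∑ i ∈ s.erase i₀, (if i ∈ s then c i - r * d i else 0) • g i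
        = ∑ i ∈ s, (if i ∈ s then c i - r * d i else 0) • g i := by
          rw [← Finset.add_sum_erase s _ hi₀s, hz, zero_smul, zero_add]
      _ = ∑ i ∈ s, c i • g i := hsum


lemma cone_closed {ι : Type*} [Fintype ι] [DecidableEq ι] (g : ι → E) (s : Finset ι) :
    IsClosed {x : E | ∃ c : ι → ℝ, (∀ i, 0 ≤ c i) ∧ x = ∑ i ∈ s, c i • g i} := by
  classical
  induction s using Finset.strongInduction with
  | _ s IH =>
  by_cases hli : LinearIndependent ℝ (fun i : ↥s => g ↑i)
  · have hset : {x : E | ∃ c : ι → ℝ, (∀ i, 0 ≤ c i) ∧ x = ∑ i ∈ s, c i • g i}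
        = {x : E | ∃ c : ↥s → ℝ, (∀ i, 0 ≤ c i) ∧ x = ∑ i, c i • g ↑i} := by
      ext x
      constructor
      · rintro ⟨c, hc, rfl⟩
        exact ⟨fun i => c ↑i, fun i => hc ↑i, by rw [← Finset.sum_coe_sort s (fun i => c i • g i)]⟩
      · rintro ⟨c, hc, rfl⟩
        refine ⟨fun i => if hi : i ∈ s then c ⟨i, hi⟩ else 0, fun i => by
          by_cases hi : i ∈ s <;> simp [hi, hc], ?_⟩
        rw [← Finset.sum_coe_sort s (fun i => (if hi : i ∈ s then c ⟨i, hi⟩ else 0) • g i)]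
        exact Finset.sum_congr rfl fun i _ => by simp [i.2]
    rw [hset]
    exact cone_closed_of_li _ hli
  · obtain ⟨d', hd'0, i₁, hd'⟩ := Fintype.not_linearIndependent_iff.mp hli
    set d : ι → ℝ := fun j => if hj : j ∈ s then d' ⟨j, hj⟩ else 0 with hd
    have hdsum : ∑ i ∈ s, d i • g i = 0 := by
      rw [← Finset.sum_coe_sort s (fun i => d i • g i)]
      rw [← hd'0]
      exact Finset.sum_congr rfl fun i _ => by simp [hd, i.2]
    have hdsum' : ∑ i ∈ s, (-d) i • g i = 0 := by
      simp only [Pi.neg_apply, neg_smul, Finset.sum_neg_distrib, hdsum, neg_zero]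
    have hset : {x : E | ∃ c : ι → ℝ, (∀ i, 0 ≤ c i) ∧ x = ∑ i ∈ s, c i • g i}
        = ⋃ i ∈ s, {x : E | ∃ c : ι → ℝ, (∀ i, 0 ≤ c i) ∧ x = ∑ j ∈ s.erase i, c j • g j} := by
      ext x
      simp only [Set.mem_setOf_eq, Set.mem_iUnion]
      constructor
      · rintro ⟨c, hc, rfl⟩
        have hpos : (∃ i ∈ s, 0 < d i) ∨ (∃ i ∈ s, 0 < (-d) i) := by
          rcases lt_or_gt_of_ne hd' with h | h
          · right; refine ⟨i₁, i₁.2, ?_⟩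
            simp only [Pi.neg_apply, hd, i₁.2, dif_pos]
            linarith
          · left; refine ⟨i₁, i₁.2, ?_⟩
            simp only [hd, i₁.2, dif_pos]
            exact h
        rcases hpos with h | h
        · obtain ⟨i₀, hi₀, c', hc', hsum⟩ := cone_reduce g s c d hc hdsum h
          exact ⟨i₀, hi₀, c', hc', hsum.symm⟩
        · obtain ⟨i₀, hi₀, c', hc', hsum⟩ := cone_reduce g s c (-d) hc hdsum' h
          exact ⟨i₀, hi₀, c', hc', hsum.symm⟩
      · rintro ⟨i, hi, c, hc, rfl⟩
        refine ⟨fun j => if j ∈ s.erase i then c j else 0, fun j => by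
          by_cases hj : j ∈ s.erase i <;> simp [hj, hc], ?_⟩
        simp only [ite_smul, zero_smul]
        rw [Finset.sum_ite_mem, Finset.inter_eq_right.mpr (Finset.erase_subset i s)]
    rw [hset]
    exact Set.Finite.isClosed_biUnion s.finite_toSet
      (fun i hi => IH (s.erase i) (Finset.erase_ssubset hi))


end Aux

/-- Polar cone formula: `(B_{Q,P})° = A_{Q,P} = cone{aᵢ : i ∈ Q \ P} + span{aᵢ : i ∈ P}`. -/
theorem stmt2 {n m : ℕ} (a : Fin m → EuclideanSpace ℝ (Fin n))
    (Q P : Finset (Fin m)) (hPQ : P ⊆ Q)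
    (B : Set (EuclideanSpace ℝ (Fin n)))
    (hB : B = {u | (∀ i ∈ Q, (inner ℝ (a i) u : ℝ) ≤ 0) ∧ ∀ i ∈ P, (inner ℝ (a i) u : ℝ) = 0}) :
    {v : EuclideanSpace ℝ (Fin n) | ∀ u ∈ B, (inner ℝ v u : ℝ) ≤ 0} =
      {v | ∃ w z : EuclideanSpace ℝ (Fin n),
        (∃ lam : Fin m → ℝ, (∀ i, 0 ≤ lam i) ∧ w = ∑ i ∈ Q \ P, lam i • a i) ∧
        (∃ mu : Fin m → ℝ, z = ∑ i ∈ P, mu i • a i) ∧ v = w + z} := by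
  classical
  set g : (Fin m ⊕ (Fin m ⊕ Fin m)) → (EuclideanSpace ℝ (Fin n)) := fun j =>
    Sum.elim (fun i => if i ∈ Q \ P then a i else 0)
      (Sum.elim (fun i => if i ∈ P then a i else 0)
        (fun i => if i ∈ P then -a i else 0)) j with hg
  set C : Set (EuclideanSpace ℝ (Fin n)) := {x | ∃ c : (Fin m ⊕ (Fin m ⊕ Fin m)) → ℝ,
      (∀ j, 0 ≤ c j) ∧ x = ∑ j, c j • g j} with hC
  -- splitting of sums
  have sum_split : ∀ c : (Fin m ⊕ (Fin m ⊕ Fin m)) → ℝ,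
      ∑ j, c j • g j = (∑ i ∈ Q \ P, c (.inl i) • a i)
        + ∑ i ∈ P, (c (.inr (.inl i)) - c (.inr (.inr i))) • a i := by
    intro c
    rw [Fintype.sum_sum_type, Fintype.sum_sum_type]
    have h1 : ∑ i : Fin m, c (.inl i) • g (.inl i) = ∑ i ∈ Q \ P, c (.inl i) • a i := by
      simp only [hg, Sum.elim_inl, smul_ite, smul_zero]
      rw [Finset.sum_ite_mem, Finset.univ_inter]
    have h2 : ∑ i : Fin m, c (.inr (.inl i)) • g (.inr (.inl i))
        = ∑ i ∈ P, c (.inr (.inl i)) • a i := by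
      simp only [hg, Sum.elim_inr, Sum.elim_inl, smul_ite, smul_zero]
      rw [Finset.sum_ite_mem, Finset.univ_inter]
    have h3 : ∑ i : Fin m, c (.inr (.inr i)) • g (.inr (.inr i))
        = ∑ i ∈ P, -(c (.inr (.inr i)) • a i) := by
      simp only [hg, Sum.elim_inr, smul_ite, smul_zero, smul_neg]
      rw [Finset.sum_ite_mem, Finset.univ_inter]
    rw [h1, h2, h3]
    congr 1
    rw [← Finset.sum_add_distrib]
    refine Finset.sum_congr rfl fun i _ => ?_
    rw [sub_smul, sub_eq_add_neg]
  -- RHS = C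
  have hRHS : {v : (EuclideanSpace ℝ (Fin n)) | ∃ w z : (EuclideanSpace ℝ (Fin n)),
      (∃ lam : Fin m → ℝ, (∀ i, 0 ≤ lam i) ∧ w = ∑ i ∈ Q \ P, lam i • a i) ∧
      (∃ mu : Fin m → ℝ, z = ∑ i ∈ P, mu i • a i) ∧ v = w + z} = C := by
    ext v
    constructor
    · rintro ⟨w, z, ⟨lam, hlam, rfl⟩, ⟨mu, rfl⟩, rfl⟩
      refine ⟨Sum.elim lam (Sum.elim (fun i => max (mu i) 0) (fun i => max (-mu i) 0)), ?_, ?_⟩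
      · rintro (j | j | j) <;> simp [hlam, le_max_right]
      · rw [sum_split]
        simp only [Sum.elim_inl, Sum.elim_inr]
        congr 1
        refine Finset.sum_congr rfl fun i _ => ?_
        congr 1
        rcases le_total (mu i) 0 with h | h
        · rw [max_eq_right h, max_eq_left (by linarith)]; ring
        · rw [max_eq_left h, max_eq_right (by linarith)]; ring
    · rintro ⟨c, hc, rfl⟩
      rw [sum_split c]
      exact ⟨_, _, ⟨fun i => c (.inl i), fun i => hc _, rfl⟩,
        ⟨fun i => c (.inr (.inl i)) - c (.inr (.inr i)), rfl⟩, rfl⟩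
  -- generators belong to C
  have hgen : ∀ j, g j ∈ C := by
    intro j₀
    refine ⟨fun j => if j = j₀ then 1 else 0, fun j => by positivity, ?_⟩
    have : ∑ j, (if j = j₀ then (1:ℝ) else 0) • g j = g j₀ := by
      rw [Finset.sum_eq_single j₀ (fun j _ hj => by rw [if_neg hj, zero_smul])
        (fun h => absurd (Finset.mem_univ j₀) h), if_pos rfl, one_smul]
    exact this.symm
  have haQP : ∀ i ∈ Q \ P, a i ∈ C := fun i hi => by
    have := hgen (.inl i); simpa only [hg, Sum.elim_inl, if_pos hi] using this
  have haP : ∀ i ∈ P, a i ∈ C := fun i hi => by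
    have := hgen (.inr (.inl i)); simpa only [hg, Sum.elim_inr, Sum.elim_inl, if_pos hi] using this
  have haP' : ∀ i ∈ P, -a i ∈ C := fun i hi => by
    have := hgen (.inr (.inr i)); simpa only [hg, Sum.elim_inr, if_pos hi] using this
  -- characterization of B
  have hB1 : ∀ u ∈ B, ∀ x ∈ C, (inner ℝ x u : ℝ) ≤ 0 := by
    rintro u hu x ⟨c, hc, rfl⟩
    rw [hB] at hu
    obtain ⟨huQ, huP⟩ := hu
    rw [sum_inner]
    refine Finset.sum_nonpos fun j _ => ?_
    rw [real_inner_smul_left]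
    refine mul_nonpos_of_nonneg_of_nonpos (hc j) ?_
    rcases j with i | i | i <;> simp only [hg, Sum.elim_inl, Sum.elim_inr]
    · by_cases hi : i ∈ Q \ P
      · rw [if_pos hi]; exact huQ i (Finset.mem_sdiff.mp hi).1
      · rw [if_neg hi, inner_zero_left]
    · by_cases hi : i ∈ P
      · rw [if_pos hi, huP i hi]
      · rw [if_neg hi, inner_zero_left]
    · by_cases hi : i ∈ P
      · rw [if_pos hi, inner_neg_left, huP i hi, neg_zero]
      · rw [if_neg hi, inner_zero_left]
  have hB2 : ∀ u : (EuclideanSpace ℝ (Fin n)), (∀ x ∈ C, (inner ℝ x u : ℝ) ≤ 0) → u ∈ B := by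
    intro u hu
    rw [hB]
    have heq : ∀ i ∈ P, (inner ℝ (a i) u : ℝ) = 0 := by
      intro i hi
      have h1 := hu _ (haP i hi)
      have h2 := hu _ (haP' i hi)
      rw [inner_neg_left] at h2
      linarith
    refine ⟨fun i hi => ?_, heq⟩
    by_cases hiP : i ∈ P
    · exact (heq i hiP).le
    · exact hu _ (haQP i (Finset.mem_sdiff.mpr ⟨hi, hiP⟩))
  -- C as a convex cone
  set K : ConvexCone ℝ (EuclideanSpace ℝ (Fin n)) :=
    { carrier := C
      smul_mem' := by
        rintro r hr x ⟨c, hc, rfl⟩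
        refine ⟨fun j => r * c j, fun j => mul_nonneg hr.le (hc j), ?_⟩
        rw [Finset.smul_sum]
        refine Finset.sum_congr rfl fun j _ => ?_
        show r • c j • g j = (r * c j) • g j
        rw [smul_smul]
      add_mem' := by
        rintro x ⟨c, hc, rfl⟩ y ⟨c', hc', rfl⟩
        refine ⟨fun j => c j + c' j, fun j => add_nonneg (hc j) (hc' j), ?_⟩
        rw [← Finset.sum_add_distrib]
        refine Finset.sum_congr rfl fun j _ => ?_
        show c j • g j + c' j • g j = (c j + c' j) • g j
        rw [add_smul] } with hK
  have hKC : (K : Set (EuclideanSpace ℝ (Fin n))) = C := rfl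
  have hCne : (K : Set (EuclideanSpace ℝ (Fin n))).Nonempty := ⟨0, ⟨fun _ => 0, fun _ => le_refl 0, by simp⟩⟩
  have hCclosed : IsClosed (K : Set (EuclideanSpace ℝ (Fin n))) := by
    rw [hKC, hC]
    exact cone_closed g Finset.univ
  have hdd : ∀ v, (∀ y, (∀ x ∈ (K : Set (EuclideanSpace ℝ (Fin n))), 0 ≤ (inner ℝ x y : ℝ)) →
      0 ≤ (inner ℝ y v : ℝ)) → v ∈ (K : Set (EuclideanSpace ℝ (Fin n))) := by
    intro v hv
    by_contra hvn
    let PC : ProperCone ℝ (EuclideanSpace ℝ (Fin n)) :=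
      { carrier := C
        add_mem' := fun hx hy => K.add_mem hx hy
        zero_mem' := ⟨fun _ => 0, fun _ => le_refl 0, by simp⟩
        smul_mem' := fun r x hx => by
          show (r : ℝ) • x ∈ C
          rcases (r.2).eq_or_lt with h | h
          · rw [← h, zero_smul]; exact ⟨fun _ => 0, fun _ => le_refl 0, by simp⟩
          · exact K.smul_mem h hx
        isClosed' := hCclosed }
    obtain ⟨y, hy, hvy⟩ := PC.hyperplane_separation' (x₀ := v) (by exact hvn)
    have := hv y (fun x hx => hy x (by exact hx))
    rw [real_inner_comm] at this
    linarith
  -- final set equality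
  rw [hRHS]
  ext v
  simp only [Set.mem_setOf_eq]
  constructor
  · intro hv
    have hvK : ∀ y, (∀ x ∈ (K : Set (EuclideanSpace ℝ (Fin n))), 0 ≤ (inner ℝ x y : ℝ)) →
        0 ≤ (inner ℝ y v : ℝ) := by
      intro y hy
      have hyB : -y ∈ B := hB2 (-y) fun x hx => by
        rw [inner_neg_right]
        have := hy x (by rwa [hKC])
        linarith
      have := hv (-y) hyB
      rw [inner_neg_right] at this
      rw [real_inner_comm]
      linarith
    exact hdd v hvK
  · intro hv u hu
    exact hB1 u hu v hv
end
end

section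
/- Let Θ and C be convex polyhedra in ℝⁿ given by Θ = {x : ⟨aᵢ, x⟩ ≤ bᵢ, i ∈ I₁} and C = {x : ⟨aᵢ, x⟩ ≤ 0, i ∈ I₂}. Let 𝒩(x) = N(x,Θ) for x ∈ Θ (and ∅ otherwise), x̄ ∈ Θ ∩ C, x̄* ∈ 𝒩(x̄). Then the Fréchet normal cone with respect to C × ℝⁿ of gph 𝒩 at (x̄, x̄*) equals ((T(x̄, Θ ∩ C) ∩ {x̄*}^⊥)° ∩ T(x̄, C)) × (T(x̄, Θ) ∩ {x̄*}^⊥). -/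
open Set Filter Topology

noncomputable section

variable {n : ℕ}

/-- The natural inner ℝ product pairing on the product `ℝⁿ × ℝⁿ`. -/
def pInner (p q : EuclideanSpace ℝ (Fin n) × EuclideanSpace ℝ (Fin n)) : ℝ :=
  (inner ℝ p.1 q.1 : ℝ) + (inner ℝ p.2 q.2 : ℝ)

/-- The sequential tangent cone. -/
def tcone (S : Set (EuclideanSpace ℝ (Fin n))) (x : EuclideanSpace ℝ (Fin n)) :
    Set (EuclideanSpace ℝ (Fin n)) :=
  {u | ∃ (t : ℕ → ℝ) (w : ℕ → EuclideanSpace ℝ (Fin n)),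
    (∀ k, 0 < t k) ∧ Tendsto t atTop (𝓝 0) ∧ Tendsto w atTop (𝓝 u) ∧ ∀ k, x + t k • w k ∈ S}

/-- The polar cone. -/
def polar (K : Set (EuclideanSpace ℝ (Fin n))) : Set (EuclideanSpace ℝ (Fin n)) :=
  {v | ∀ u ∈ K, (inner ℝ v u : ℝ) ≤ 0}

/-- The Fréchet normal cone of a subset of the product space with respect to a set `D`. -/
def pFncWrt (D S : Set (EuclideanSpace ℝ (Fin n) × EuclideanSpace ℝ (Fin n)))
    (z : EuclideanSpace ℝ (Fin n) × EuclideanSpace ℝ (Fin n)) :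
    Set (EuclideanSpace ℝ (Fin n) × EuclideanSpace ℝ (Fin n)) :=
  {v | (∃ p > (0:ℝ), z + p • v ∈ D) ∧
    ∀ ε > (0:ℝ), ∀ᶠ y in nhdsWithin z (S ∩ D), pInner v (y - z) ≤ ε * ‖y - z‖}

section Aux

open Finset

variable {m : ℕ}

local notation "E" => EuclideanSpace ℝ (Fin n)

/-- cone generated by `a i`, `i ∈ A`. -/
def coneOf (a : Fin m → E) (A : Finset (Fin m)) : Set E :=
  {x | ∃ lam : Fin m → ℝ, (∀ i, 0 ≤ lam i) ∧ x = ∑ i ∈ A, lam i • a i}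

lemma coneOf_mem_iff {a : Fin m → E} {A : Finset (Fin m)} {x : E} :
    x ∈ coneOf a A ↔ ∃ lam : Fin m → ℝ, (∀ i, 0 ≤ lam i) ∧ x = ∑ i ∈ A, lam i • a i :=
  Iff.rfl

lemma zero_mem_coneOf (a : Fin m → E) (A : Finset (Fin m)) : (0:E) ∈ coneOf a A :=
  ⟨fun _ => 0, fun _ => le_refl _, by simp⟩

lemma mem_coneOf_of_mem (a : Fin m → E) {A : Finset (Fin m)} {i : Fin m} (hi : i ∈ A) :
    a i ∈ coneOf a A := by
  classical
  refine ⟨fun j => if j = i then 1 else 0, fun j => by positivity, ?_⟩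
  rw [Finset.sum_eq_single_of_mem i hi]
  · simp
  · intro j _ hj; simp [hj]

/-- Conic Carathéodory. -/
lemma coneOf_caratheodory (a : Fin m → E) :
    ∀ (N : ℕ) (A : Finset (Fin m)), A.card ≤ N → ∀ x ∈ coneOf a A,
      ∃ t ⊆ A, LinearIndependent ℝ (fun i : t => a i) ∧ x ∈ coneOf a t := by
  classical
  intro N
  induction N with
  | zero =>
    intro A hA x hx
    rw [Nat.le_zero, Finset.card_eq_zero] at hA
    subst hA
    refine ⟨∅, le_refl _, ?_, hx⟩
    have : IsEmpty ((∅ : Finset (Fin m)) : Type) := by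
      exact ⟨fun x => Finset.notMem_empty _ x.2⟩
    exact linearIndependent_empty_type
  | succ N ih =>
    intro A hA x hx
    by_cases hind : LinearIndependent ℝ (fun i : A => a i)
    · exact ⟨A, le_refl _, hind, hx⟩
    · obtain ⟨g, hg0, i₀, hgi₀⟩ := Fintype.not_linearIndependent_iff.mp hind
      obtain ⟨lam, hlam, hx⟩ := hx
      -- build c : Fin m → ℝ supported on A with sum zero and some positive entry on A
      set c0 : Fin m → ℝ := fun i => if h : i ∈ A then g ⟨i, h⟩ else 0 with hc0def
      have hc0sum : ∑ i ∈ A, c0 i • a i = 0 := by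
        rw [← Finset.sum_coe_sort A (fun i => c0 i • a i), ← hg0]
        refine Finset.sum_congr rfl fun i _ => ?_
        have : c0 i.val = g i := by simp [hc0def, i.prop]
        rw [this]
      have hc0ne : c0 i₀.val ≠ 0 := by simp [hc0def, i₀.prop, hgi₀]
      obtain ⟨c, hcsum, j, hjA, hcj⟩ :
          ∃ c : Fin m → ℝ, ∑ i ∈ A, c i • a i = 0 ∧ ∃ j ∈ A, 0 < c j := by
        rcases lt_or_gt_of_ne hc0ne with h | h
        · refine ⟨fun i => -c0 i, ?_, i₀.val, i₀.prop, ?_⟩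
          · have : ∑ i ∈ A, (-c0 i) • a i = -∑ i ∈ A, c0 i • a i := by
              rw [← Finset.sum_neg_distrib]
              exact Finset.sum_congr rfl fun i _ => by rw [neg_smul]
            rw [this, hc0sum, neg_zero]
          · show 0 < -c0 i₀.val
            linarith
        · exact ⟨c0, hc0sum, i₀.val, i₀.prop, h⟩
      set S := A.filter (fun i => 0 < c i) with hS
      have hSne : S.Nonempty := ⟨j, by simp [hS, hjA, hcj]⟩
      obtain ⟨k, hkS, hk⟩ := Finset.exists_min_image S (fun i => lam i / c i) hSne
      have hkA : k ∈ A := (Finset.mem_filter.mp hkS).1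
      have hck : 0 < c k := (Finset.mem_filter.mp hkS).2
      set τ := lam k / c k with hτ
      have hτ0 : 0 ≤ τ := div_nonneg (hlam k) hck.le
      set lam' : Fin m → ℝ := fun i => if i ∈ A.erase k then lam i - τ * c i else 0 with hlam'
      have hlam'0 : ∀ i, 0 ≤ lam' i := by
        intro i
        rw [hlam']
        dsimp only
        split
        · rename_i hi
          have hiA : i ∈ A := Finset.mem_of_mem_erase hi
          rcases le_or_gt (c i) 0 with h | h
          · nlinarith [hlam i]
          · have : τ ≤ lam i / c i := hk i (Finset.mem_filter.mpr ⟨hiA, h⟩)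
            rw [le_div_iff₀ h] at this
            linarith
        · exact le_refl _
      have hxsum : x = ∑ i ∈ A.erase k, lam' i • a i := by
        have h1 : ∑ i ∈ A.erase k, lam' i • a i = ∑ i ∈ A.erase k, (lam i - τ * c i) • a i :=
          Finset.sum_congr rfl fun i hi => by rw [hlam']; dsimp only; rw [if_pos hi]
        have hkzero : (lam k - τ * c k) • a k = 0 • a k := by
          rw [hτ, div_mul_cancel₀ _ hck.ne']
          simp
        have h2 : ∑ i ∈ A.erase k, (lam i - τ * c i) • a i
            = ∑ i ∈ A, (lam i - τ * c i) • a i := by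
          apply Finset.sum_erase
          rw [hkzero, zero_smul]
        rw [h1, h2]
        have : ∑ i ∈ A, (lam i - τ * c i) • a i
            = ∑ i ∈ A, lam i • a i - τ • ∑ i ∈ A, c i • a i := by
          rw [Finset.smul_sum, ← Finset.sum_sub_distrib]
          refine Finset.sum_congr rfl fun i _ => ?_
          rw [sub_smul, smul_smul]
        rw [this, hcsum, smul_zero, sub_zero, hx]
      have hcard : (A.erase k).card ≤ N := by
        have := Finset.card_erase_of_mem hkA
        omega
      obtain ⟨t, ht, hind, hmem⟩ := ih (A.erase k) hcard x ⟨lam', hlam'0, hxsum⟩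
      exact ⟨t, ht.trans (Finset.erase_subset _ _), hind, hmem⟩

lemma isClosed_coneOf (a : Fin m → E) (A : Finset (Fin m)) : IsClosed (coneOf a A) := by
  classical
  have key : coneOf a A = ⋃ t ∈ {t : Finset (Fin m) | t ⊆ A ∧ LinearIndependent ℝ (fun i : t => a i)},
      (fun lam : ↥t → ℝ => ∑ i : t, lam i • a i) '' {lam | ∀ i, 0 ≤ lam i} := by
    ext x
    simp only [Set.mem_iUnion, Set.mem_image, Set.mem_setOf_eq]
    constructor
    · intro hx
      obtain ⟨t, ht, hind, lam, hlam, hsum⟩ := coneOf_caratheodory a A.card A le_rfl x hx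
      refine ⟨t, ⟨ht, hind⟩, fun i => lam i, fun i => hlam i, ?_⟩
      rw [hsum, ← Finset.sum_coe_sort t (fun i => lam i • a i)]
    · rintro ⟨t, ⟨ht, _⟩, lam, hlam, rfl⟩
      refine ⟨fun i => if h : i ∈ t then lam ⟨i, h⟩ else 0, ?_, ?_⟩
      · intro i
        by_cases h : i ∈ t
        · simpa [h] using hlam ⟨i, h⟩
        · simp [h]
      · rw [← Finset.sum_subset ht (by intro i _ hi; simp [hi])]
        rw [← Finset.sum_coe_sort t (fun i => (if h : i ∈ t then lam ⟨i, h⟩ else 0) • a i)]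
        refine Finset.sum_congr rfl fun i _ => ?_
        simp
  rw [key]
  apply Set.Finite.isClosed_biUnion (Set.toFinite _)
  rintro t ⟨-, hind⟩
  have hker : LinearMap.ker (Fintype.linearCombination ℝ (fun i : t => a i)) = ⊥ := by
    rw [LinearMap.ker_eq_bot']
    intro g hg
    rw [Fintype.linearCombination_apply] at hg
    exact funext (Fintype.linearIndependent_iff.mp hind g hg)
  have hemb := LinearMap.isClosedEmbedding_of_injective hker
  have hclset : IsClosed {lam : ↥t → ℝ | ∀ i, 0 ≤ lam i} := by
    have : {lam : ↥t → ℝ | ∀ i, 0 ≤ lam i} = ⋂ i, {lam | 0 ≤ lam i} := by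
      ext; simp [Set.mem_iInter]
    rw [this]
    exact isClosed_iInter fun i => isClosed_le continuous_const (continuous_apply i)
  have := hemb.isClosedMap _ hclset
  convert this using 2
  exact (Fintype.linearCombination_apply _ _ _).symm

/-- Small positive steps along a direction that respects active constraints stay feasible. -/
lemma exists_pos_feasible (a : Fin m → E) (b : Fin m → ℝ) (J : Finset (Fin m)) (x u : E)
    (hx : ∀ i ∈ J, (inner ℝ (a i) x : ℝ) ≤ b i)
    (hu : ∀ i ∈ J, (inner ℝ (a i) x : ℝ) = b i → (inner ℝ (a i) u : ℝ) ≤ 0) :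
    ∃ t > (0:ℝ), ∀ s : ℝ, 0 ≤ s → s ≤ t → ∀ i ∈ J, (inner ℝ (a i) (x + s • u) : ℝ) ≤ b i := by
  classical
  induction J using Finset.induction_on with
  | empty => exact ⟨1, one_pos, fun s _ _ i hi => absurd hi (Finset.notMem_empty i)⟩
  | @insert j J hjJ ih =>
    obtain ⟨t₁, ht₁, h₁⟩ := ih (fun i hi => hx i (Finset.mem_insert_of_mem hi))
      (fun i hi => hu i (Finset.mem_insert_of_mem hi))
    have hxj := hx j (Finset.mem_insert_self j J)
    have hexp : ∀ s : ℝ, (inner ℝ (a j) (x + s • u) : ℝ)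
        = (inner ℝ (a j) x : ℝ) + s * (inner ℝ (a j) u : ℝ) := by
      intro s; rw [inner_add_right, real_inner_smul_right]
    by_cases hju : (inner ℝ (a j) u : ℝ) ≤ 0
    · refine ⟨t₁, ht₁, fun s hs hst i hi => ?_⟩
      rcases Finset.mem_insert.mp hi with rfl | hi
      · rw [hexp]; nlinarith
      · exact h₁ s hs hst i hi
    · push_neg at hju
      have hslack : (inner ℝ (a j) x : ℝ) < b j := by
        rcases lt_or_eq_of_le hxj with h | h
        · exact h
        · exact absurd (hu j (Finset.mem_insert_self j J) h) (not_le.mpr hju)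
      set t₂ := (b j - (inner ℝ (a j) x : ℝ)) / (inner ℝ (a j) u : ℝ) with ht₂def
      have ht₂ : 0 < t₂ := div_pos (by linarith) hju
      refine ⟨min t₁ t₂, lt_min ht₁ ht₂, fun s hs hst i hi => ?_⟩
      rcases Finset.mem_insert.mp hi with rfl | hi
      · rw [hexp]
        have : s ≤ t₂ := le_trans hst (min_le_right _ _)
        rw [ht₂def, le_div_iff₀ hju] at this
        linarith
      · exact h₁ s hs (le_trans hst (min_le_left _ _)) i hi

/-- Easy inclusion: the cone of active gradients is contained in the normal cone. -/
lemma coneOf_subset_normal (a : Fin m → E) (b : Fin m → ℝ) (I : Finset (Fin m))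
    {A : Finset (Fin m)} {x v : E} (hAsub : A ⊆ I)
    (hAact : ∀ i ∈ A, (inner ℝ (a i) x : ℝ) = b i) (hv : v ∈ coneOf a A)
    (y : E) (hy : ∀ i ∈ I, (inner ℝ (a i) y : ℝ) ≤ b i) :
    (inner ℝ v (y - x) : ℝ) ≤ 0 := by
  obtain ⟨lam, hlam, rfl⟩ := coneOf_mem_iff.mp hv
  rw [sum_inner]
  refine Finset.sum_nonpos fun i hi => ?_
  rw [real_inner_smul_left, inner_sub_right]
  have h1 := hy i (hAsub hi)
  have h2 := hAact i hi
  nlinarith [hlam i]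

/-- The convex cone structure on `coneOf`. -/
def coneOfCC (a : Fin m → E) (A : Finset (Fin m)) : ConvexCone ℝ E where
  carrier := coneOf a A
  smul_mem' := by
    intro c hc x hx
    obtain ⟨lam, hlam, rfl⟩ := coneOf_mem_iff.mp hx
    refine coneOf_mem_iff.mpr ⟨fun i => c * lam i, fun i => mul_nonneg hc.le (hlam i), ?_⟩
    rw [Finset.smul_sum]
    exact Finset.sum_congr rfl fun i _ => smul_smul c (lam i) (a i)
  add_mem' := by
    intro x hx y hy
    obtain ⟨lam, hlam, rfl⟩ := coneOf_mem_iff.mp hx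
    obtain ⟨mu, hmu, rfl⟩ := coneOf_mem_iff.mp hy
    refine coneOf_mem_iff.mpr ⟨fun i => lam i + mu i, fun i => add_nonneg (hlam i) (hmu i), ?_⟩
    rw [← Finset.sum_add_distrib]
    exact Finset.sum_congr rfl fun i _ => (add_smul (lam i) (mu i) (a i)).symm

/-- Farkas' lemma: a normal vector of the polyhedron lies in the cone of active gradients. -/
lemma farkas (a : Fin m → E) (b : Fin m → ℝ) (I : Finset (Fin m)) (x v : E)
    {A : Finset (Fin m)}
    (hAfull : ∀ i ∈ I, (inner ℝ (a i) x : ℝ) = b i → i ∈ A)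
    (hx : ∀ i ∈ I, (inner ℝ (a i) x : ℝ) ≤ b i)
    (hv : ∀ y : E, (∀ i ∈ I, (inner ℝ (a i) y : ℝ) ≤ b i) → (inner ℝ v (y - x) : ℝ) ≤ 0) :
    v ∈ coneOf a A := by
  have step1 : ∀ u : E, (∀ i ∈ A, (inner ℝ (a i) u : ℝ) ≤ 0) → (inner ℝ v u : ℝ) ≤ 0 := by
    intro u hu
    obtain ⟨t, ht, hfeas⟩ := exists_pos_feasible a b I x u hx
      (fun i hi hact => hu i (hAfull i hi hact))
    have hy := hv (x + t • u) (hfeas t ht.le le_rfl)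
    rw [add_sub_cancel_left, real_inner_smul_right] at hy
    by_contra h
    push_neg at h
    nlinarith
  by_contra hvA
  obtain ⟨f, u, hfs, hfu⟩ := geometric_hahn_banach_closed_point
    (s := coneOf a A) (coneOfCC a A).convex (isClosed_coneOf a A) hvA
  have hu0 : 0 < u := by
    have := hfs 0 (zero_mem_coneOf a A)
    rwa [map_zero] at this
  have hfle : ∀ c ∈ coneOf a A, f c ≤ 0 := by
    intro c hc
    by_contra hpos
    push_neg at hpos
    have hmem : (2 * u / f c) • c ∈ coneOf a A := by
      exact (coneOfCC a A).smul_mem (by positivity) hc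
    have := hfs _ hmem
    rw [map_smul, smul_eq_mul, div_mul_cancel₀ _ hpos.ne'] at this
    linarith
  have hw := step1 ((InnerProductSpace.toDual ℝ E).symm f) (fun i hi => by
    rw [real_inner_comm, InnerProductSpace.toDual_symm_apply]
    exact hfle _ (mem_coneOf_of_mem a hi))
  rw [real_inner_comm, InnerProductSpace.toDual_symm_apply] at hw
  linarith

/-- If all small positive steps along `u` stay in `S`, then `u` is a tangent direction. -/
lemma seq_mem_tcone {S : Set E} {x u : E} {t : ℝ} (ht : 0 < t)
    (h : ∀ s : ℝ, 0 < s → s ≤ t → x + s • u ∈ S) : u ∈ tcone S x := by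
  refine ⟨fun k => t * (1 / ((k : ℝ) + 1)), fun _ => u, fun k => ?_, ?_,
    tendsto_const_nhds, fun k => ?_⟩
  · positivity
  · have := tendsto_one_div_add_atTop_nhds_zero_nat.const_mul t
    simpa using this
  · refine h _ (by positivity) ?_
    show t * (1 / ((k : ℝ) + 1)) ≤ t
    rw [mul_one_div]
    apply div_le_self ht.le
    have : (0:ℝ) ≤ (k:ℝ) := Nat.cast_nonneg k
    linarith

/-- Tangent directions satisfy the active linearized constraints. -/
lemma tcone_subset_lin {S : Set E} {x u : E} {c : E} {d : ℝ}
    (hS : ∀ y ∈ S, (inner ℝ c y : ℝ) ≤ d) (hact : (inner ℝ c x : ℝ) = d)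
    (hu : u ∈ tcone S x) : (inner ℝ c u : ℝ) ≤ 0 := by
  obtain ⟨t, w, ht0, htlim, hwlim, hmem⟩ := hu
  have hterm : ∀ k, (inner ℝ c (w k) : ℝ) ≤ 0 := by
    intro k
    have := hS _ (hmem k)
    rw [inner_add_right, real_inner_smul_right, hact] at this
    nlinarith [ht0 k]
  have hlim : Tendsto (fun k => (inner ℝ c (w k) : ℝ)) atTop (𝓝 (inner ℝ c u : ℝ)) :=
    tendsto_const_nhds.inner hwlim
  exact le_of_tendsto hlim (Eventually.of_forall hterm)

/-- Inactive constraints remain inactive nearby. -/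
lemma eventually_active_subset (a : Fin m → E) (b : Fin m → ℝ) (I : Finset (Fin m)) (xb : E)
    (hxb : ∀ i ∈ I, (inner ℝ (a i) xb : ℝ) ≤ b i) :
    ∃ r > (0:ℝ), ∀ x : E, ‖x - xb‖ < r → ∀ i ∈ I,
      (inner ℝ (a i) x : ℝ) = b i → (inner ℝ (a i) xb : ℝ) = b i := by
  classical
  induction I using Finset.induction_on with
  | empty => exact ⟨1, one_pos, fun x _ i hi => absurd hi (Finset.notMem_empty i)⟩
  | @insert j J hjJ ih =>
    obtain ⟨r₁, hr₁, h₁⟩ := ih (fun i hi => hxb i (Finset.mem_insert_of_mem hi))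
    by_cases hact : (inner ℝ (a j) xb : ℝ) = b j
    · refine ⟨r₁, hr₁, fun x hx i hi hiact => ?_⟩
      rcases Finset.mem_insert.mp hi with rfl | hi
      · exact hact
      · exact h₁ x hx i hi hiact
    · have hslack : (inner ℝ (a j) xb : ℝ) < b j :=
        lt_of_le_of_ne (hxb j (Finset.mem_insert_self j J)) hact
      set r₂ := (b j - (inner ℝ (a j) xb : ℝ)) / (‖a j‖ + 1) with hr₂def
      have hr₂ : 0 < r₂ := div_pos (by linarith) (by positivity)
      refine ⟨min r₁ r₂, lt_min hr₁ hr₂, fun x hx i hi hiact => ?_⟩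
      rcases Finset.mem_insert.mp hi with rfl | hi
      · exfalso
        have h2 : (inner ℝ (a i) (x - xb) : ℝ) ≤ ‖a i‖ * ‖x - xb‖ :=
          real_inner_le_norm _ _
        rw [inner_sub_right, hiact] at h2
        have hxr₂ : ‖x - xb‖ < r₂ := lt_of_lt_of_le hx (min_le_right _ _)
        have h3 : ‖a i‖ * ‖x - xb‖ < ‖a i‖ * r₂ + r₂ := by
          nlinarith [norm_nonneg (a i), norm_nonneg (x - xb)]
        have hle : (‖a i‖ + 1) * r₂ = b i - (inner ℝ (a i) xb : ℝ) := by
          rw [hr₂def, mul_div_cancel₀]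
          positivity
        nlinarith
      · exact h₁ x (lt_of_lt_of_le hx (min_le_left _ _)) i hi hiact

/-- Uniform radius around `xbs` such that any generated cone meeting the ball contains `xbs`. -/
lemma xbs_mem_of_close (a : Fin m → E) (xbs : E) :
    ∃ r > (0:ℝ), ∀ (A : Finset (Fin m)) (w : E),
      w ∈ coneOf a A → ‖w - xbs‖ < r → xbs ∈ coneOf a A := by
  classical
  have hsep : ∀ A : Finset (Fin m), ∃ r > (0:ℝ),
      xbs ∉ coneOf a A → ∀ w ∈ coneOf a A, r ≤ ‖w - xbs‖ := by
    intro A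
    by_cases hA : xbs ∈ coneOf a A
    · exact ⟨1, one_pos, fun h => absurd hA h⟩
    · have hopen : IsOpen (coneOf a A)ᶜ := (isClosed_coneOf a A).isOpen_compl
      obtain ⟨ε, hε, hball⟩ := Metric.isOpen_iff.mp hopen xbs hA
      refine ⟨ε, hε, fun _ w hw => ?_⟩
      by_contra hcon
      push_neg at hcon
      have : w ∈ Metric.ball xbs ε := by
        rw [Metric.mem_ball, dist_eq_norm]
        exact hcon
      exact (hball this) hw
  choose rfun hrpos hrsep using hsep
  have hne : (Finset.univ : Finset (Finset (Fin m))).Nonempty := Finset.univ_nonempty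
  refine ⟨Finset.univ.inf' hne rfun, ?_, ?_⟩
  · rw [gt_iff_lt, Finset.lt_inf'_iff]
    exact fun A _ => hrpos A
  · intro A w hw hclose
    by_contra hA
    have h1 := hrsep A hA w hw
    have h2 : Finset.univ.inf' hne rfun ≤ rfun A :=
      Finset.inf'_le _ (Finset.mem_univ A)
    linarith

end Aux

set_option maxHeartbeats 2000000 in
/-- Formula for the Fréchet normal cone with respect to `C × ℝⁿ` of the graph of the normal
cone mapping of the polyhedron `Θ`, at `(xb, xbs)`. -/
theorem stmt7 {m : ℕ} (a : Fin m → EuclideanSpace ℝ (Fin n)) (b : Fin m → ℝ)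
    (I₁ I₂ : Finset (Fin m))
    (Θ C : Set (EuclideanSpace ℝ (Fin n)))
    (hΘ : Θ = {x | ∀ i ∈ I₁, (inner ℝ (a i) x : ℝ) ≤ b i})
    (hC : C = {x | ∀ i ∈ I₂, (inner ℝ (a i) x : ℝ) ≤ 0})
    (gphN : Set (EuclideanSpace ℝ (Fin n) × EuclideanSpace ℝ (Fin n)))
    (hgph : gphN = {p | p.1 ∈ Θ ∧ ∀ y ∈ Θ, (inner ℝ p.2 (y - p.1) : ℝ) ≤ 0})
    (xb xbs : EuclideanSpace ℝ (Fin n)) (hxb : xb ∈ Θ ∩ C)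
    (hxbs : ∀ y ∈ Θ, (inner ℝ xbs (y - xb) : ℝ) ≤ 0) :
    pFncWrt (C ×ˢ (univ : Set (EuclideanSpace ℝ (Fin n)))) gphN (xb, xbs) =
      ((polar (tcone (Θ ∩ C) xb ∩ {u | (inner ℝ xbs u : ℝ) = 0}) ∩ tcone C xb) ×ˢ
        (tcone Θ xb ∩ {u | (inner ℝ xbs u : ℝ) = 0})) := by
  classical
  have hxbΘ : ∀ i ∈ I₁, (inner ℝ (a i) xb : ℝ) ≤ b i := by
    have h := hxb.1; rw [hΘ] at h; exact h
  have hxbC : ∀ i ∈ I₂, (inner ℝ (a i) xb : ℝ) ≤ 0 := by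
    have h := hxb.2; rw [hC] at h; exact h
  set A₁ : EuclideanSpace ℝ (Fin n) → Finset (Fin m) :=
    fun x => I₁.filter (fun i => (inner ℝ (a i) x : ℝ) = b i) with hA₁def
  have hA₁mem : ∀ (x : EuclideanSpace ℝ (Fin n)) (i : Fin m),
      i ∈ A₁ x ↔ i ∈ I₁ ∧ (inner ℝ (a i) x : ℝ) = b i := by
    intro x i; simp [hA₁def, Finset.mem_filter]
  -- Farkas for graph points
  have hFk : ∀ x w : EuclideanSpace ℝ (Fin n), (∀ i ∈ I₁, (inner ℝ (a i) x : ℝ) ≤ b i) →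
      (∀ y ∈ Θ, (inner ℝ w (y - x) : ℝ) ≤ 0) → w ∈ coneOf a (A₁ x) := by
    intro x w hx hw
    refine farkas a b I₁ x w (fun i hi hact => (hA₁mem x i).mpr ⟨hi, hact⟩) hx ?_
    intro y hy
    exact hw y (by rw [hΘ]; exact hy)
  have hxbsN : xbs ∈ coneOf a (A₁ xb) := hFk xb xbs hxbΘ hxbs
  obtain ⟨r₁, hr₁, hact₁⟩ := eventually_active_subset a b I₁ xb hxbΘ
  obtain ⟨r₂, hr₂, hclose⟩ := xbs_mem_of_close a xbs
  have hK3 : ∀ x w : EuclideanSpace ℝ (Fin n), (∀ i ∈ I₁, (inner ℝ (a i) x : ℝ) ≤ b i) →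
      (∀ y ∈ Θ, (inner ℝ w (y - x) : ℝ) ≤ 0) → ‖w - xbs‖ < r₂ → xbs ∈ coneOf a (A₁ x) :=
    fun x w hx hw hcl => hclose (A₁ x) w (hFk x w hx hw) hcl
  have hAsub : ∀ x : EuclideanSpace ℝ (Fin n), ‖x - xb‖ < r₁ → A₁ x ⊆ A₁ xb := by
    intro x hx i hi
    rcases (hA₁mem x i).mp hi with ⟨hiI, hiact⟩
    exact (hA₁mem xb i).mpr ⟨hiI, hact₁ x hx i hiI hiact⟩
  -- membership description of the intersection
  have hmemS : ∀ y : EuclideanSpace ℝ (Fin n) × EuclideanSpace ℝ (Fin n),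
      y ∈ gphN ∩ C ×ˢ (univ : Set (EuclideanSpace ℝ (Fin n))) ↔
      (∀ i ∈ I₁, (inner ℝ (a i) y.1 : ℝ) ≤ b i) ∧ (∀ y' ∈ Θ, (inner ℝ y.2 (y' - y.1) : ℝ) ≤ 0)
        ∧ (∀ i ∈ I₂, (inner ℝ (a i) y.1 : ℝ) ≤ 0) := by
    intro y
    rw [Set.mem_inter_iff, hgph, Set.mem_setOf_eq, Set.mem_prod, hC]
    constructor
    · rintro ⟨⟨h1, h2⟩, h3, -⟩
      rw [hΘ] at h1
      exact ⟨h1, h2, h3⟩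
    · rintro ⟨h1, h2, h3⟩
      exact ⟨⟨by rw [hΘ]; exact h1, h2⟩, h3, Set.mem_univ _⟩
  -- segment property
  have hseg : ∀ y ∈ gphN ∩ C ×ˢ (univ : Set (EuclideanSpace ℝ (Fin n))),
      ‖y.1 - xb‖ < r₁ → ‖y.2 - xbs‖ < r₂ → ∀ τ : ℝ, 0 < τ → τ ≤ 1 →
      (xb, xbs) + τ • (y - (xb, xbs)) ∈ gphN ∩ C ×ˢ (univ : Set (EuclideanSpace ℝ (Fin n))) := by
    intro y hy h1 h2 τ hτ0 hτ1
    obtain ⟨hyΘ, hyN, hyC⟩ := (hmemS y).mp hy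
    rw [hmemS]
    have hz1 : ((xb, xbs) + τ • (y - (xb, xbs))).1 = xb + τ • (y.1 - xb) := rfl
    have hz2 : ((xb, xbs) + τ • (y - (xb, xbs))).2 = xbs + τ • (y.2 - xbs) := rfl
    rw [hz1, hz2]
    refine ⟨?_, ?_, ?_⟩
    · intro i hi
      rw [inner_add_right, real_inner_smul_right, inner_sub_right]
      have h3 := hxbΘ i hi
      have h4 := hyΘ i hi
      nlinarith
    · -- normality
      have hwA : y.2 ∈ coneOf a (A₁ y.1) := hFk y.1 y.2 hyΘ hyN
      have hbA : xbs ∈ coneOf a (A₁ y.1) := hK3 y.1 y.2 hyΘ hyN h2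
      obtain ⟨lam, hlam, hweq⟩ := hwA
      obtain ⟨mu, hmu, hbeq⟩ := hbA
      have hcomb : xbs + τ • (y.2 - xbs) ∈ coneOf a (A₁ y.1) := by
        refine ⟨fun i => (1 - τ) * mu i + τ * lam i, fun i => ?_, ?_⟩
        · show 0 ≤ (1 - τ) * mu i + τ * lam i
          nlinarith [hmu i, hlam i]
        have e1 : xbs + τ • (y.2 - xbs) = (1 - τ) • xbs + τ • y.2 := by
          rw [smul_sub, sub_smul, one_smul]
          abel
        rw [e1, hbeq, hweq, Finset.smul_sum, Finset.smul_sum, ← Finset.sum_add_distrib]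
        refine Finset.sum_congr rfl fun i _ => ?_
        rw [smul_smul, smul_smul, ← add_smul]
      have hactive : ∀ i ∈ A₁ y.1, (inner ℝ (a i) (xb + τ • (y.1 - xb)) : ℝ) = b i := by
        intro i hi
        have hia := ((hA₁mem y.1 i).mp hi).2
        have hib := ((hA₁mem xb i).mp (hAsub y.1 h1 hi)).2
        rw [inner_add_right, real_inner_smul_right, inner_sub_right, hia, hib]
        ring
      intro y' hy'
      refine coneOf_subset_normal a b I₁
        (fun i hi => ((hA₁mem y.1 i).mp hi).1) hactive hcomb y' ?_
      rw [hΘ] at hy'; exact hy'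
    · intro i hi
      rw [inner_add_right, real_inner_smul_right, inner_sub_right]
      have h3 := hxbC i hi
      have h4 := hyC i hi
      nlinarith
  -- local characterization of the Fréchet condition
  have hchar : ∀ v : EuclideanSpace ℝ (Fin n) × EuclideanSpace ℝ (Fin n),
      ((∀ ε > (0:ℝ), ∀ᶠ y in nhdsWithin (xb, xbs)
          (gphN ∩ C ×ˢ (univ : Set (EuclideanSpace ℝ (Fin n)))),
          pInner v (y - (xb, xbs)) ≤ ε * ‖y - (xb, xbs)‖)
        ↔ (∀ y ∈ gphN ∩ C ×ˢ (univ : Set (EuclideanSpace ℝ (Fin n))),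
          ‖y.1 - xb‖ < r₁ → ‖y.2 - xbs‖ < r₂ → pInner v (y - (xb, xbs)) ≤ 0)) := by
    intro v
    constructor
    · intro hF y hy h1 h2
      by_contra hcon
      push_neg at hcon
      set c := pInner v (y - (xb, xbs)) with hc
      have hyz : y - (xb, xbs) ≠ 0 := by
        intro h0
        rw [hc, h0] at hcon
        simp [pInner] at hcon
      have hnz : 0 < ‖y - (xb, xbs)‖ := norm_pos_iff.mpr hyz
      set ε := c / (2 * ‖y - (xb, xbs)‖) with hεdef
      have hεpos : 0 < ε := div_pos hcon (by positivity)
      have hev := hF ε hεpos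
      set yk : ℕ → EuclideanSpace ℝ (Fin n) × EuclideanSpace ℝ (Fin n) :=
        fun k => (xb, xbs) + (1 / ((k:ℝ) + 1)) • (y - (xb, xbs)) with hykdef
      have hτpos : ∀ k : ℕ, (0:ℝ) < 1 / ((k:ℝ) + 1) := by
        intro k; positivity
      have hτle : ∀ k : ℕ, (1:ℝ) / ((k:ℝ) + 1) ≤ 1 := by
        intro k
        rw [div_le_one (by positivity)]
        have : (0:ℝ) ≤ (k:ℝ) := Nat.cast_nonneg k
        linarith
      have hykS : ∀ k, yk k ∈ gphN ∩ C ×ˢ (univ : Set (EuclideanSpace ℝ (Fin n))) :=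
        fun k => hseg y hy h1 h2 _ (hτpos k) (hτle k)
      have hyktends : Tendsto yk atTop
          (nhdsWithin (xb, xbs) (gphN ∩ C ×ˢ (univ : Set (EuclideanSpace ℝ (Fin n))))) := by
        rw [tendsto_nhdsWithin_iff]
        refine ⟨?_, Eventually.of_forall hykS⟩
        have h0 : Tendsto (fun k : ℕ => (1 / ((k:ℝ) + 1)) • (y - (xb, xbs))) atTop (𝓝 0) := by
          have := (tendsto_one_div_add_atTop_nhds_zero_nat (𝕜 := ℝ)).smul_const (y - (xb, xbs))
          simpa using this
        have h1' := Tendsto.const_add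
          ((xb, xbs) : EuclideanSpace ℝ (Fin n) × EuclideanSpace ℝ (Fin n)) h0
        rw [hykdef]
        simpa [one_div] using h1'
      obtain ⟨k, hk⟩ := (hyktends.eventually hev).exists
      have hky : yk k - (xb, xbs) = (1 / ((k:ℝ) + 1)) • (y - (xb, xbs)) := by
        rw [hykdef]; exact add_sub_cancel_left _ _
      rw [hky] at hk
      set τ := (1:ℝ) / ((k:ℝ) + 1) with hτdef
      have hτ0 : 0 < τ := hτpos k
      have hpin : pInner v (τ • (y - (xb, xbs))) = τ * c := by
        rw [hc]
        simp only [pInner, Prod.smul_fst, Prod.smul_snd, real_inner_smul_right]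
        ring
      have hnrm : ‖τ • (y - (xb, xbs))‖ = τ * ‖y - (xb, xbs)‖ := by
        rw [norm_smul, Real.norm_eq_abs, abs_of_pos hτ0]
      rw [hpin, hnrm, hεdef] at hk
      have hfin : τ * c ≤ τ * c / 2 := by
        have h5 : c / (2 * ‖y - (xb, xbs)‖) * (τ * ‖y - (xb, xbs)‖) = τ * c / 2 := by
          field_simp
        rw [h5] at hk
        exact hk
      nlinarith
    · intro hQ ε hε
      have hball : Metric.ball ((xb, xbs) : EuclideanSpace ℝ (Fin n) × EuclideanSpace ℝ (Fin n))
          (min r₁ r₂) ∈ 𝓝 (xb, xbs) := Metric.ball_mem_nhds _ (lt_min hr₁ hr₂)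
      filter_upwards [mem_nhdsWithin_of_mem_nhds hball, self_mem_nhdsWithin] with y hy1 hy2
      rw [Metric.mem_ball, dist_eq_norm] at hy1
      have h1 : ‖y.1 - xb‖ < r₁ :=
        lt_of_le_of_lt (norm_fst_le (y - (xb, xbs))) (lt_of_lt_of_le hy1 (min_le_left _ _))
      have h2 : ‖y.2 - xbs‖ < r₂ :=
        lt_of_le_of_lt (norm_snd_le (y - (xb, xbs))) (lt_of_lt_of_le hy1 (min_le_right _ _))
      have h3 := hQ y hy2 h1 h2
      have h4 : (0:ℝ) ≤ ε * ‖y - (xb, xbs)‖ := mul_nonneg hε.le (norm_nonneg _)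
      linarith
  -- main equality
  ext v
  simp only [pFncWrt, Set.mem_setOf_eq, Set.mem_prod, Set.mem_inter_iff]
  constructor
  · rintro ⟨⟨p, hp, hpD⟩, hF⟩
    have hQ := (hchar v).mp hF
    have hv1C : v.1 ∈ tcone C xb := by
      have hpC : xb + p • v.1 ∈ C := (Set.mem_prod.mp hpD).1
      have hv1lin : ∀ i ∈ I₂, (inner ℝ (a i) xb : ℝ) = 0 → (inner ℝ (a i) v.1 : ℝ) ≤ 0 := by
        intro i hi hiact
        rw [hC] at hpC
        have h3 := hpC i hi
        rw [inner_add_right, real_inner_smul_right, hiact] at h3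
        nlinarith
      obtain ⟨t, ht, hfe⟩ := exists_pos_feasible a (fun _ => 0) I₂ xb v.1 hxbC hv1lin
      refine seq_mem_tcone ht (fun s hs hst => ?_)
      rw [hC]
      exact fun i hi => hfe s hs.le hst i hi
    have hv2lin : ∀ i ∈ I₁, (inner ℝ (a i) xb : ℝ) = b i → (inner ℝ (a i) v.2 : ℝ) ≤ 0 := by
      intro i hi hiact
      set s := r₂ / (2 * (‖a i‖ + 1)) with hsdef
      have hs0 : (0:ℝ) < s := by positivity
      have hyS : ((xb, xbs + s • a i) :
          EuclideanSpace ℝ (Fin n) × EuclideanSpace ℝ (Fin n)) ∈ gphN ∩ C ×ˢ univ := by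
        rw [hmemS]
        refine ⟨hxbΘ, ?_, hxbC⟩
        intro y' hy'
        show (inner ℝ (xbs + s • a i) (y' - xb) : ℝ) ≤ 0
        rw [inner_add_left, real_inner_smul_left]
        have h4 := hxbs y' hy'
        have h5 : (inner ℝ (a i) (y' - xb) : ℝ) ≤ 0 := by
          rw [inner_sub_right, hiact]
          have h6 : (inner ℝ (a i) y' : ℝ) ≤ b i := by rw [hΘ] at hy'; exact hy' i hi
          linarith
        nlinarith
      have hn1 : ‖((xb, xbs + s • a i) :
          EuclideanSpace ℝ (Fin n) × EuclideanSpace ℝ (Fin n)).1 - xb‖ < r₁ := by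
        show ‖xb - xb‖ < r₁
        rw [sub_self, norm_zero]; exact hr₁
      have hn2 : ‖((xb, xbs + s • a i) :
          EuclideanSpace ℝ (Fin n) × EuclideanSpace ℝ (Fin n)).2 - xbs‖ < r₂ := by
        show ‖xbs + s • a i - xbs‖ < r₂
        rw [add_sub_cancel_left, norm_smul, Real.norm_eq_abs, abs_of_pos hs0]
        have hna : (0:ℝ) ≤ ‖a i‖ := norm_nonneg _
        rw [hsdef]
        rw [div_mul_eq_mul_div, div_lt_iff₀ (by positivity)]
        nlinarith
      have hQy := hQ _ hyS hn1 hn2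
      have heq : pInner v (((xb, xbs + s • a i) :
          EuclideanSpace ℝ (Fin n) × EuclideanSpace ℝ (Fin n)) - (xb, xbs))
          = s * (inner ℝ v.2 (a i) : ℝ) := by
        show (inner ℝ v.1 (xb - xb) : ℝ) + (inner ℝ v.2 (xbs + s • a i - xbs) : ℝ)
          = s * (inner ℝ v.2 (a i) : ℝ)
        rw [sub_self, inner_zero_right, add_sub_cancel_left, real_inner_smul_right, zero_add]
      rw [heq] at hQy
      have h6 : (inner ℝ v.2 (a i) : ℝ) ≤ 0 := by nlinarith
      rw [real_inner_comm] at h6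
      exact h6
    have hv2Θ : v.2 ∈ tcone Θ xb := by
      obtain ⟨t, ht, hfe⟩ := exists_pos_feasible a b I₁ xb v.2 hxbΘ hv2lin
      refine seq_mem_tcone ht (fun s hs hst => ?_)
      rw [hΘ]
      exact fun i hi => hfe s hs.le hst i hi
    have hv2perp : (inner ℝ xbs v.2 : ℝ) = 0 := by
      set s := min 1 (r₂ / (2 * ‖xbs‖ + 2)) with hsdef
      have hs0 : (0:ℝ) < s := lt_min one_pos (by positivity)
      have hs1 : s ≤ 1 := min_le_left _ _
      have hsr : s * ‖xbs‖ < r₂ := by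
        have h5 : s ≤ r₂ / (2 * ‖xbs‖ + 2) := min_le_right _ _
        have hna : (0:ℝ) ≤ ‖xbs‖ := norm_nonneg _
        have h6 : s * ‖xbs‖ ≤ r₂ / (2 * ‖xbs‖ + 2) * ‖xbs‖ :=
          mul_le_mul_of_nonneg_right h5 hna
        have h7 : r₂ / (2 * ‖xbs‖ + 2) * ‖xbs‖ < r₂ := by
          rw [div_mul_eq_mul_div, div_lt_iff₀ (by positivity)]
          nlinarith
        linarith
      have key : ∀ c : ℝ, 0 ≤ c → |c - 1| * ‖xbs‖ < r₂ → (c - 1) * (inner ℝ v.2 xbs : ℝ) ≤ 0 := by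
        intro c hc hcr
        have hyS : ((xb, c • xbs) :
            EuclideanSpace ℝ (Fin n) × EuclideanSpace ℝ (Fin n)) ∈ gphN ∩ C ×ˢ univ := by
          rw [hmemS]
          refine ⟨hxbΘ, ?_, hxbC⟩
          intro y' hy'
          show (inner ℝ (c • xbs) (y' - xb) : ℝ) ≤ 0
          rw [real_inner_smul_left]
          have h4 := hxbs y' hy'
          nlinarith
        have hn1 : ‖((xb, c • xbs) :
            EuclideanSpace ℝ (Fin n) × EuclideanSpace ℝ (Fin n)).1 - xb‖ < r₁ := by
          show ‖xb - xb‖ < r₁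
          rw [sub_self, norm_zero]; exact hr₁
        have hn2 : ‖((xb, c • xbs) :
            EuclideanSpace ℝ (Fin n) × EuclideanSpace ℝ (Fin n)).2 - xbs‖ < r₂ := by
          show ‖c • xbs - xbs‖ < r₂
          have : c • xbs - xbs = (c - 1) • xbs := by
            rw [sub_smul, one_smul]
          rw [this, norm_smul, Real.norm_eq_abs]
          exact hcr
        have hQy := hQ _ hyS hn1 hn2
        have heq : pInner v (((xb, c • xbs) :
            EuclideanSpace ℝ (Fin n) × EuclideanSpace ℝ (Fin n)) - (xb, xbs))
            = (c - 1) * (inner ℝ v.2 xbs : ℝ) := by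
          show (inner ℝ v.1 (xb - xb) : ℝ) + (inner ℝ v.2 (c • xbs - xbs) : ℝ)
            = (c - 1) * (inner ℝ v.2 xbs : ℝ)
          have : c • xbs - xbs = (c - 1) • xbs := by rw [sub_smul, one_smul]
          rw [sub_self, inner_zero_right, this, real_inner_smul_right, zero_add]
        rw [heq] at hQy
        exact hQy
      have habs : |((1:ℝ) + s) - 1| * ‖xbs‖ < r₂ := by
        have : |((1:ℝ) + s) - 1| = s := by
          rw [add_sub_cancel_left, abs_of_pos hs0]
        rw [this]; exact hsr
      have habs' : |((1:ℝ) - s) - 1| * ‖xbs‖ < r₂ := by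
        have : |((1:ℝ) - s) - 1| = s := by
          have h8 : ((1:ℝ) - s) - 1 = -s := by ring
          rw [h8, abs_neg, abs_of_pos hs0]
        rw [this]; exact hsr
      have k1 := key (1 + s) (by linarith) habs
      have k2 := key (1 - s) (by linarith) habs'
      have e1 : ((1:ℝ) + s) - 1 = s := by ring
      have e2 : ((1:ℝ) - s) - 1 = -s := by ring
      rw [e1] at k1
      rw [e2] at k2
      have h9 : (inner ℝ v.2 xbs : ℝ) = 0 := by nlinarith
      rw [real_inner_comm] at h9
      exact h9
    refine ⟨⟨?_, hv1C⟩, hv2Θ, hv2perp⟩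
    -- polar part
    intro u hu
    obtain ⟨huT, huperp⟩ := hu
    replace huperp : (inner ℝ xbs u : ℝ) = 0 := huperp
    have huΘ : ∀ i ∈ I₁, (inner ℝ (a i) xb : ℝ) = b i → (inner ℝ (a i) u : ℝ) ≤ 0 := by
      intro i hi hiact
      refine tcone_subset_lin (S := Θ ∩ C) ?_ hiact huT
      intro y' hy'
      have := hy'.1; rw [hΘ] at this; exact this i hi
    have huC : ∀ i ∈ I₂, (inner ℝ (a i) xb : ℝ) = 0 → (inner ℝ (a i) u : ℝ) ≤ 0 := by
      intro i hi hiact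
      refine tcone_subset_lin (S := Θ ∩ C) ?_ hiact huT
      intro y' hy'
      have := hy'.2; rw [hC] at this; exact this i hi
    obtain ⟨mu, hmu, hxbseq⟩ := hxbsN
    have hsum0 : ∑ i ∈ A₁ xb, mu i * (inner ℝ (a i) u : ℝ) = 0 := by
      have h5 : (inner ℝ xbs u : ℝ) = ∑ i ∈ A₁ xb, mu i * (inner ℝ (a i) u : ℝ) := by
        rw [hxbseq, sum_inner]
        exact Finset.sum_congr rfl fun i _ => real_inner_smul_left _ _ _
      rw [← h5]
      exact huperp
    have hterm : ∀ i ∈ A₁ xb, mu i * (inner ℝ (a i) u : ℝ) ≤ 0 := by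
      intro i hi
      rcases (hA₁mem xb i).mp hi with ⟨hiI, hiact⟩
      have := huΘ i hiI hiact
      nlinarith [hmu i]
    have hzero : ∀ i ∈ A₁ xb, mu i * (inner ℝ (a i) u : ℝ) = 0 :=
      (Finset.sum_eq_zero_iff_of_nonpos hterm).mp hsum0
    obtain ⟨t₁, ht₁, hfe₁⟩ := exists_pos_feasible a b I₁ xb u hxbΘ huΘ
    obtain ⟨t₂, ht₂, hfe₂⟩ := exists_pos_feasible a (fun _ => 0) I₂ xb u hxbC huC
    set s := min (min t₁ t₂) (r₁ / (2 * (‖u‖ + 1))) with hsdef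
    have hs0 : (0:ℝ) < s := lt_min (lt_min ht₁ ht₂) (by positivity)
    have hst₁ : s ≤ t₁ := le_trans (min_le_left _ _) (min_le_left _ _)
    have hst₂ : s ≤ t₂ := le_trans (min_le_left _ _) (min_le_right _ _)
    have hyS : ((xb + s • u, xbs) :
        EuclideanSpace ℝ (Fin n) × EuclideanSpace ℝ (Fin n)) ∈ gphN ∩ C ×ˢ univ := by
      rw [hmemS]
      refine ⟨fun i hi => hfe₁ s hs0.le hst₁ i hi, ?_, fun i hi => hfe₂ s hs0.le hst₂ i hi⟩
      intro y' hy'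
      show (inner ℝ xbs (y' - (xb + s • u)) : ℝ) ≤ 0
      rw [hxbseq, sum_inner]
      refine Finset.sum_nonpos fun i hi => ?_
      rw [real_inner_smul_left]
      rcases eq_or_lt_of_le (hmu i) with h0 | h0
      · rw [← h0]; simp
      · have hiu : (inner ℝ (a i) u : ℝ) = 0 :=
          (mul_eq_zero.mp (hzero i hi)).resolve_left h0.ne'
        rcases (hA₁mem xb i).mp hi with ⟨hiI, hiact⟩
        have hy'le : (inner ℝ (a i) y' : ℝ) ≤ b i := by rw [hΘ] at hy'; exact hy' i hiI
        have heq2 : (inner ℝ (a i) (y' - (xb + s • u)) : ℝ) = (inner ℝ (a i) y' : ℝ) - b i := by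
          rw [inner_sub_right, inner_add_right, real_inner_smul_right, hiact, hiu]
          ring
        rw [heq2]
        nlinarith [hmu i]
    have hn1 : ‖((xb + s • u, xbs) :
        EuclideanSpace ℝ (Fin n) × EuclideanSpace ℝ (Fin n)).1 - xb‖ < r₁ := by
      show ‖xb + s • u - xb‖ < r₁
      rw [add_sub_cancel_left, norm_smul, Real.norm_eq_abs, abs_of_pos hs0]
      have h5 : s ≤ r₁ / (2 * (‖u‖ + 1)) := min_le_right _ _
      have hnu : (0:ℝ) ≤ ‖u‖ := norm_nonneg _
      have h6 : s * ‖u‖ ≤ r₁ / (2 * (‖u‖ + 1)) * ‖u‖ := mul_le_mul_of_nonneg_right h5 hnu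
      have h7 : r₁ / (2 * (‖u‖ + 1)) * ‖u‖ < r₁ := by
        rw [div_mul_eq_mul_div, div_lt_iff₀ (by positivity)]
        nlinarith
      linarith
    have hn2 : ‖((xb + s • u, xbs) :
        EuclideanSpace ℝ (Fin n) × EuclideanSpace ℝ (Fin n)).2 - xbs‖ < r₂ := by
      show ‖xbs - xbs‖ < r₂
      rw [sub_self, norm_zero]; exact hr₂
    have hQy := hQ _ hyS hn1 hn2
    have heq : pInner v (((xb + s • u, xbs) :
        EuclideanSpace ℝ (Fin n) × EuclideanSpace ℝ (Fin n)) - (xb, xbs))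
        = s * (inner ℝ v.1 u : ℝ) := by
      show (inner ℝ v.1 (xb + s • u - xb) : ℝ) + (inner ℝ v.2 (xbs - xbs) : ℝ)
        = s * (inner ℝ v.1 u : ℝ)
      rw [add_sub_cancel_left, sub_self, inner_zero_right, real_inner_smul_right, add_zero]
    rw [heq] at hQy
    nlinarith
  · rintro ⟨⟨hpol, hv1C⟩, hv2Θ, hv2perp⟩
    replace hv2perp : (inner ℝ xbs v.2 : ℝ) = 0 := hv2perp
    constructor
    · -- the direction condition
      have hv1lin : ∀ i ∈ I₂, (inner ℝ (a i) xb : ℝ) = 0 → (inner ℝ (a i) v.1 : ℝ) ≤ 0 := by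
        intro i hi hiact
        refine tcone_subset_lin (S := C) ?_ hiact hv1C
        intro y' hy'
        rw [hC] at hy'; exact hy' i hi
      obtain ⟨t, ht, hfe⟩ := exists_pos_feasible a (fun _ => 0) I₂ xb v.1 hxbC hv1lin
      refine ⟨t, ht, Set.mem_prod.mpr ⟨?_, Set.mem_univ _⟩⟩
      show xb + t • v.1 ∈ C
      rw [hC]
      exact fun i hi => hfe t ht.le le_rfl i hi
    · -- the Fréchet inequality
      refine (hchar v).mpr ?_
      intro y hy h1 h2
      obtain ⟨hyΘ, hyN, hyC⟩ := (hmemS y).mp hy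
      have hterm2 : (inner ℝ v.2 (y.2 - xbs) : ℝ) ≤ 0 := by
        rw [inner_sub_right]
        have hper : (inner ℝ v.2 xbs : ℝ) = 0 := by
          rw [real_inner_comm]; exact hv2perp
        obtain ⟨lam, hlam, hyeq⟩ := hFk y.1 y.2 hyΘ hyN
        have hv2a : ∀ i ∈ A₁ y.1, (inner ℝ v.2 (a i) : ℝ) ≤ 0 := by
          intro i hi
          rcases (hA₁mem xb i).mp (hAsub y.1 h1 hi) with ⟨hiI, hiact⟩
          have h5 : (inner ℝ (a i) v.2 : ℝ) ≤ 0 := by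
            refine tcone_subset_lin (S := Θ) ?_ hiact hv2Θ
            intro y' hy'
            rw [hΘ] at hy'; exact hy' i hiI
          rw [real_inner_comm]
          exact h5
        have h6 : (inner ℝ v.2 y.2 : ℝ) ≤ 0 := by
          rw [hyeq, inner_sum]
          refine Finset.sum_nonpos fun i hi => ?_
          rw [real_inner_smul_right]
          nlinarith [hlam i, hv2a i hi]
        linarith
      have hterm1 : (inner ℝ v.1 (y.1 - xb) : ℝ) ≤ 0 := by
        refine hpol (y.1 - xb) ⟨?_, ?_⟩
        · refine seq_mem_tcone one_pos (fun s hs0 hs1 => ?_)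
          constructor
          · rw [hΘ]
            intro i hi
            rw [inner_add_right, real_inner_smul_right, inner_sub_right]
            have h3 := hxbΘ i hi
            have h4 := hyΘ i hi
            nlinarith
          · rw [hC]
            intro i hi
            rw [inner_add_right, real_inner_smul_right, inner_sub_right]
            have h3 := hxbC i hi
            have h4 := hyC i hi
            nlinarith
        · rw [Set.mem_setOf_eq]
          have hle : (inner ℝ xbs (y.1 - xb) : ℝ) ≤ 0 := by
            refine hxbs y.1 ?_
            rw [hΘ]; exact hyΘ
          have hxbsA := hK3 y.1 y.2 hyΘ hyN h2
          have hge : (inner ℝ xbs (xb - y.1) : ℝ) ≤ 0 := by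
            refine coneOf_subset_normal a b I₁
              (fun i hi => ((hA₁mem y.1 i).mp hi).1)
              (fun i hi => ((hA₁mem y.1 i).mp hi).2) hxbsA xb hxbΘ
          have h7 : (inner ℝ xbs (xb - y.1) : ℝ) = -(inner ℝ xbs (y.1 - xb) : ℝ) := by
            rw [← inner_neg_right, neg_sub]
          linarith
      show pInner v (y - (xb, xbs)) ≤ 0
      have heq : pInner v (y - (xb, xbs))
          = (inner ℝ v.1 (y.1 - xb) : ℝ) + (inner ℝ v.2 (y.2 - xbs) : ℝ) := rfl
      rw [heq]
      linarith
end
end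

section
/- Let Θ = {x ∈ ℝⁿ : ⟨aᵢ, x⟩ ≤ bᵢ, i ∈ I₁} be a polyhedron, x̄ ∈ Θ, x̄* ∈ N(x̄, Θ), and suppose w ∈ T(x̄, Θ) with ⟨x̄*, w⟩ = 0. Then for all sufficiently large k, the point xₖ = x̄ + k⁻¹ w lies in Θ and x̄* ∈ N(xₖ, Θ). -/
open Set Filter Topology

noncomputable section

/-- Persistence of normal vectors along tangent directions orthogonal to them: if
`w ∈ T(xb, Θ)` and `⟪xbs, w⟫ = 0`, then for all large `k` the point `xₖ = xb + k⁻¹ w`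
lies in `Θ` and `xbs ∈ N(xₖ, Θ)`. -/
theorem stmt9 {n m : ℕ} (a : Fin m → EuclideanSpace ℝ (Fin n)) (b : Fin m → ℝ)
    (I₁ : Finset (Fin m)) (Θ : Set (EuclideanSpace ℝ (Fin n)))
    (hΘ : Θ = {x | ∀ i ∈ I₁, (inner ℝ (a i) x : ℝ) ≤ b i})
    (xb xbs w : EuclideanSpace ℝ (Fin n)) (hx : xb ∈ Θ)
    (hxbs : ∀ y ∈ Θ, (inner ℝ xbs (y - xb) : ℝ) ≤ 0)
    (hw : ∃ (t : ℕ → ℝ) (u : ℕ → EuclideanSpace ℝ (Fin n)),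
      (∀ k, 0 < t k) ∧ Tendsto t atTop (𝓝 0) ∧ Tendsto u atTop (𝓝 w) ∧
      ∀ k, xb + t k • u k ∈ Θ)
    (horth : (inner ℝ xbs w : ℝ) = 0) :
    ∃ K : ℕ, ∀ k ≥ K, 0 < k →
      xb + ((k : ℝ)⁻¹) • w ∈ Θ ∧
      ∀ y ∈ Θ, (inner ℝ xbs (y - (xb + ((k : ℝ)⁻¹) • w)) : ℝ) ≤ 0 := by
  obtain ⟨t, u, ht, htlim, hulim, hmem⟩ := hw
  -- For active constraints, ⟨a i, w⟩ ≤ 0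
  have hactive : ∀ i ∈ I₁, (inner ℝ (a i) xb : ℝ) = b i → (inner ℝ (a i) w : ℝ) ≤ 0 := by
    intro i hi heq
    have hk : ∀ k, (inner ℝ (a i) (u k) : ℝ) ≤ 0 := by
      intro k
      have h1 : (inner ℝ (a i) (xb + t k • u k) : ℝ) ≤ b i := by
        have := hmem k
        rw [hΘ] at this
        exact this i hi
      rw [inner_add_right, real_inner_smul_right, heq] at h1
      nlinarith [ht k]
    have hc : Tendsto (fun k => (inner ℝ (a i) (u k) : ℝ)) atTop (𝓝 (inner ℝ (a i) w : ℝ)) :=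
      (continuous_inner.comp (Continuous.prodMk_right (a i))).continuousAt.tendsto.comp hulim
    exact le_of_tendsto hc (Eventually.of_forall hk)
  -- eventual membership per constraint
  have hev : ∀ i ∈ I₁, ∀ᶠ k : ℕ in atTop,
      (inner ℝ (a i) xb : ℝ) + (k : ℝ)⁻¹ * (inner ℝ (a i) w : ℝ) ≤ b i := by
    intro i hi
    have hxb : (inner ℝ (a i) xb : ℝ) ≤ b i := by
      rw [hΘ] at hx; exact hx i hi
    rcases le_or_gt ((inner ℝ (a i) w : ℝ)) 0 with hle | hpos
    · filter_upwards with k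
      have : (k : ℝ)⁻¹ * (inner ℝ (a i) w : ℝ) ≤ 0 :=
        mul_nonpos_of_nonneg_of_nonpos (by positivity) hle
      linarith
    · have hlt : (inner ℝ (a i) xb : ℝ) < b i := by
        rcases lt_or_eq_of_le hxb with h | h
        · exact h
        · exact absurd (hactive i hi h) (not_le.mpr hpos)
      have hlim : Tendsto (fun k : ℕ => (k : ℝ)⁻¹ * (inner ℝ (a i) w : ℝ)) atTop (𝓝 0) := by
        simpa using tendsto_inv_atTop_nhds_zero_nat.mul_const ((inner ℝ (a i) w : ℝ))
      have := hlim.eventually (eventually_lt_nhds (show (0:ℝ) < b i - inner ℝ (a i) xb by linarith))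
      filter_upwards [this] with k hk
      linarith
  have hall : ∀ᶠ k : ℕ in atTop, ∀ i ∈ I₁,
      (inner ℝ (a i) xb : ℝ) + (k : ℝ)⁻¹ * (inner ℝ (a i) w : ℝ) ≤ b i :=
    (I₁.eventually_all).mpr hev
  obtain ⟨K, hK⟩ := eventually_atTop.mp hall
  refine ⟨K, fun k hk hkpos => ⟨?_, ?_⟩⟩
  · rw [hΘ]
    intro i hi
    rw [inner_add_right, real_inner_smul_right]
    exact hK k hk i hi
  · intro y hy
    have h1 := hxbs y hy
    have : y - (xb + ((k : ℝ)⁻¹) • w) = (y - xb) - (k : ℝ)⁻¹ • w := by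
      abel
    rw [this, inner_sub_right, real_inner_smul_right, horth]
    linarith
end
end
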